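/- Let R be a finite Frobenius ring, g, h ∈ R^k nonzero with h ∉ gR. Then Σ_{x ∈ R^k} w_hom(x·g)·w_hom(x·h) = |R|^k. -/
import Mathlib

set_option linter.unusedSectionVars false

open scoped Classical

/-- The normalized homogeneous weight defined from an additive character. -/
noncomputable def whom {R : Type} [Ring R] [Fintype R] (χ : AddChar R ℂ) (x : R) : ℂ :=
  1 - (Fintype.card Rˣ : ℂ)⁻¹ * ∑ u : Rˣ, χ ((u : R) * x)

/-- A generating character: a character of `(R,+)` whose kernel contains no
nonzero left ideal. -/
def IsGenChar {R : Type} [Ring R] [Fintype R] (χ : AddChar R ℂ) : Prop :=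
  ∀ I : Ideal R, I ≠ ⊥ → ∃ x ∈ I, χ x ≠ 1

namespace FrobAux

variable {R : Type} [Ring R] [Fintype R]

/-- `y ↦ ∑ i, y i * a i` as an additive hom. -/
def dotHom {k : ℕ} (a : Fin k → R) : (Fin k → R) →+ R where
  toFun y := ∑ i, y i * a i
  map_zero' := by simp
  map_add' y z := by simp [add_mul, Finset.sum_add_distrib]

@[simp] lemma dotHom_apply {k : ℕ} (a y : Fin k → R) : dotHom a y = ∑ i, y i * a i := rfl

lemma smul_dot {k : ℕ} (a y : Fin k → R) (r : R) :
    ∑ i, (r * y i) * a i = r * ∑ i, y i * a i := by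
  rw [Finset.mul_sum]
  exact Finset.sum_congr rfl fun i _ => by rw [mul_assoc]

lemma dotHom_smul {k : ℕ} (a y : Fin k → R) (r : R) :
    dotHom a (fun i => r * y i) = r * dotHom a y := by
  simp [smul_dot]

lemma dot_single {k : ℕ} (a : Fin k → R) (i : Fin k) (r : R) :
    ∑ j, (Pi.single i r : Fin k → R) j * a j = r * a i := by
  simp [Pi.single_apply, ite_mul]

/-- `z ↦ ∑ i, y i * z i` as an additive hom. -/
def dotHomL {k : ℕ} (y : Fin k → R) : (Fin k → R) →+ R where
  toFun z := ∑ i, y i * z i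
  map_zero' := by simp
  map_add' z w := by simp [mul_add, Finset.sum_add_distrib]

@[simp] lemma dotHomL_apply {k : ℕ} (y z : Fin k → R) : dotHomL y z = ∑ i, y i * z i := rfl

lemma char_eq_zero_iff {A : Type*} [AddMonoid A] (ψ : AddChar A ℂ) :
    ψ = 0 ↔ ∀ y, ψ y = 1 := by
  rw [DFunLike.ext_iff]
  simp

variable (χ : AddChar R ℂ)

lemma genL (hχ : IsGenChar χ) {a : R} (ha : ∀ r : R, χ (r * a) = 1) : a = 0 := by
  by_contra h0
  obtain ⟨x, hxI, hx⟩ := hχ (Submodule.span R {a})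
    (by simpa [Submodule.span_singleton_eq_bot] using h0)
  obtain ⟨r, rfl⟩ := Submodule.mem_span_singleton.mp hxI
  exact hx (by simpa [smul_eq_mul] using ha r)

/-- `a ↦ (r ↦ χ (r * a))`. -/
noncomputable def mr (a : R) : AddChar R ℂ :=
  χ.compAddMonoidHom (AddMonoidHom.mulRight a)

@[simp] lemma mr_apply (a r : R) : mr χ a r = χ (r * a) := rfl

lemma mr_injective (hχ : IsGenChar χ) : Function.Injective (mr χ) := by
  intro a b hab
  have key : ∀ r : R, χ (r * (a - b)) = 1 := by
    intro r
    have h1 : χ (r * a) = χ (r * b) := DFunLike.congr_fun hab r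
    have h2 : r * (a - b) = r * a + -(r * b) := by
      rw [mul_sub, sub_eq_add_neg]
    rw [h2, AddChar.map_add_eq_mul, h1, ← AddChar.map_add_eq_mul]
    simp
  exact sub_eq_zero.mp (genL χ hχ key)

lemma mr_injective' (hχ : IsGenChar χ) : Function.Injective (mr χ) := mr_injective χ hχ

lemma mr_surjective (hχ : IsGenChar χ) : Function.Surjective (mr χ) :=
  ((Fintype.bijective_iff_injective_and_card (mr χ)).mpr
    ⟨mr_injective χ hχ, (AddChar.card_eq).symm⟩).2

lemma genR (hχ : IsGenChar χ) {a : R} (ha : ∀ r : R, χ (a * r) = 1) : a = 0 := by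
  refine (AddChar.forall_apply_eq_zero).mp fun ψ => ?_
  obtain ⟨b, rfl⟩ := mr_surjective χ hχ ψ
  exact ha b

lemma sum_mulLeft (hχ : IsGenChar χ) {a : R} (ha : a ≠ 0) :
    ∑ r : R, χ (r * a) = 0 := by
  have hne : mr χ a ≠ 0 := by
    intro h0
    rw [char_eq_zero_iff] at h0
    exact ha (genL χ hχ fun r => by simpa using h0 r)
  simpa using AddChar.sum_eq_zero_iff_ne_zero.mpr hne

/-- `a ↦ (r ↦ χ (a * r))`. -/
noncomputable def ml (a : R) : AddChar R ℂ :=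
  χ.compAddMonoidHom (AddMonoidHom.mulLeft a)

@[simp] lemma ml_apply (a r : R) : ml χ a r = χ (a * r) := rfl

lemma sum_mulRight (hχ : IsGenChar χ) {a : R} (ha : a ≠ 0) :
    ∑ r : R, χ (a * r) = 0 := by
  have hne : ml χ a ≠ 0 := by
    intro h0
    rw [char_eq_zero_iff] at h0
    exact ha (genR χ hχ fun r => by simpa using h0 r)
  simpa using AddChar.sum_eq_zero_iff_ne_zero.mpr hne

lemma sum_dot (hχ : IsGenChar χ) {k : ℕ} {a : Fin k → R} (ha : a ≠ 0) :
    ∑ y : Fin k → R, χ (∑ i, y i * a i) = 0 := by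
  have hne : χ.compAddMonoidHom (dotHom a) ≠ 0 := by
    intro h0
    rw [char_eq_zero_iff] at h0
    refine ha (funext fun i => genL χ hχ fun r => ?_)
    simpa [dot_single] using h0 (Pi.single i r)
  simpa using AddChar.sum_eq_zero_iff_ne_zero.mpr hne

end FrobAux
namespace FrobAux

variable {R : Type} [Ring R] [Fintype R] (χ : AddChar R ℂ)

/-- `r ↦ (g i * r)ᵢ` as an additive hom. -/
def rmulHom {k : ℕ} (g : Fin k → R) : R →+ (Fin k → R) where
  toFun r := fun i => g i * r
  map_zero' := by funext i; simp
  map_add' r s := by funext i; simp [mul_add]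

@[simp] lemma rmulHom_apply {k : ℕ} (g : Fin k → R) (r : R) (i : Fin k) :
    rmulHom g r i = g i * r := rfl

lemma key (hχ : IsGenChar χ) {k : ℕ} (g h : Fin k → R)
    (hD : ∀ y : Fin k → R, (∑ i, y i * g i) = 0 → (∑ i, y i * h i) = 0) :
    ∃ r : R, h = fun i => g i * r := by
  classical
  set D : AddSubgroup (Fin k → R) := (dotHom g).ker with hDdef
  set I : AddSubgroup R := (dotHom g).range with hIdef
  have hIsmul : ∀ (s : R), ∀ x ∈ I, s * x ∈ I := by
    rintro s x ⟨y, rfl⟩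
    exact ⟨fun i => s * y i, dotHom_smul g y s⟩
  have hDsmul : ∀ (r : R), ∀ y ∈ D, (fun i => r * y i) ∈ D := by
    intro r y hy
    have hy' : dotHom g y = 0 := hy
    have : dotHom g (fun i => r * y i) = 0 := by rw [dotHom_smul, hy', mul_zero]
    exact this
  have hgI : ∀ i, g i ∈ I := fun i =>
    ⟨Pi.single i 1, by simp [dot_single]⟩
  set AnnF : Finset R := Finset.univ.filter (fun r => ∀ x ∈ I, x * r = 0) with hAnnF
  set EF : Finset (Fin k → R) :=
    Finset.univ.filter (fun z => ∀ y ∈ D, ∑ i, y i * z i = 0) with hEF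
  set GrF : Finset (Fin k → R) :=
    Finset.univ.filter (fun z => z ∈ (rmulHom g).range) with hGrF
  -- Counting 1
  have count1 : (Fintype.card R : ℂ) = (AnnF.card : ℂ) * (Fintype.card I : ℂ) := by
    have lhs : ∑ x : I, ∑ r : R, χ ((x : R) * r) = (Fintype.card R : ℂ) := by
      have hterm : ∀ x : I, (∑ r : R, χ ((x : R) * r))
          = if x = 0 then (Fintype.card R : ℂ) else 0 := by
        intro x
        split_ifs with hx
        · simp [hx]
        · exact sum_mulRight χ hχ fun h0 => hx (Subtype.ext h0)
      rw [Finset.sum_congr rfl fun x _ => hterm x]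
      simp
    have rhs : ∀ r : R, (∑ x : I, χ ((x : R) * r))
        = if (∀ x ∈ I, x * r = 0) then (Fintype.card I : ℂ) else 0 := by
      intro r
      set ψ : AddChar I ℂ := χ.compAddMonoidHom ((AddMonoidHom.mulRight r).comp I.subtype) with hψ
      have happ : ∀ x : I, ψ x = χ ((x : R) * r) := fun x => rfl
      have hiff : ψ = 0 ↔ ∀ x ∈ I, x * r = 0 := by
        rw [char_eq_zero_iff]
        constructor
        · intro h1 x hx
          refine genL χ hχ fun s => ?_
          have h2 := h1 ⟨s * x, hIsmul s x hx⟩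
          rw [happ] at h2
          simpa [mul_assoc] using h2
        · intro h1 x
          rw [happ, h1 x x.2, AddChar.map_zero_eq_one]
      calc ∑ x : I, χ ((x : R) * r) = ∑ x : I, ψ x :=
            (Finset.sum_congr rfl fun x _ => (happ x).symm)
        _ = if ψ = 0 then (Fintype.card I : ℂ) else 0 := AddChar.sum_eq_ite ψ
        _ = _ := if_congr hiff rfl rfl
    calc (Fintype.card R : ℂ) = ∑ x : I, ∑ r : R, χ ((x : R) * r) := lhs.symm
      _ = ∑ r : R, ∑ x : I, χ ((x : R) * r) := Finset.sum_comm
      _ = ∑ r : R, if (∀ x ∈ I, x * r = 0) then (Fintype.card I : ℂ) else 0 :=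
            Finset.sum_congr rfl fun r _ => rhs r
      _ = (AnnF.card : ℂ) * (Fintype.card I : ℂ) := by
            rw [Finset.sum_ite, Finset.sum_const, Finset.sum_const_zero, add_zero, hAnnF,
              nsmul_eq_mul]
  -- Counting 2
  have count2 : (Fintype.card (Fin k → R) : ℂ)
      = (EF.card : ℂ) * (Fintype.card D : ℂ) := by
    have lhs : ∑ y : D, ∑ z : Fin k → R, χ (∑ i, (y : Fin k → R) i * z i)
        = (Fintype.card (Fin k → R) : ℂ) := by
      have hterm : ∀ y : D, (∑ z : Fin k → R, χ (∑ i, (y : Fin k → R) i * z i))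
          = if y = 0 then (Fintype.card (Fin k → R) : ℂ) else 0 := by
        intro y
        split_ifs with hy
        · simp [hy]
        · have hne : χ.compAddMonoidHom (dotHomL (y : Fin k → R)) ≠ 0 := by
            intro h0
            rw [char_eq_zero_iff] at h0
            refine hy (Subtype.ext (funext fun i => genR χ hχ fun r => ?_))
            have := h0 (Pi.single i r)
            simpa [dotHomL, Pi.single_apply, mul_ite] using this
          simpa using AddChar.sum_eq_zero_iff_ne_zero.mpr hne
      rw [Finset.sum_congr rfl fun y _ => hterm y]
      simp
    have rhs : ∀ z : Fin k → R, (∑ y : D, χ (∑ i, (y : Fin k → R) i * z i))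
        = if (∀ y ∈ D, ∑ i, y i * z i = 0) then (Fintype.card D : ℂ) else 0 := by
      intro z
      set ψ : AddChar D ℂ := χ.compAddMonoidHom ((dotHom z).comp D.subtype) with hψ
      have happ : ∀ y : D, ψ y = χ (∑ i, (y : Fin k → R) i * z i) := fun y => rfl
      have hiff : ψ = 0 ↔ ∀ y ∈ D, ∑ i, y i * z i = 0 := by
        rw [char_eq_zero_iff]
        constructor
        · intro h1 y hy
          refine genL χ hχ fun r => ?_
          have h2 := h1 ⟨fun i => r * y i, hDsmul r y hy⟩
          rw [happ] at h2
          simpa [smul_dot] using h2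
        · intro h1 y
          rw [happ, h1 y y.2, AddChar.map_zero_eq_one]
      calc ∑ y : D, χ (∑ i, (y : Fin k → R) i * z i) = ∑ y : D, ψ y :=
            (Finset.sum_congr rfl fun y _ => (happ y).symm)
        _ = if ψ = 0 then (Fintype.card D : ℂ) else 0 := AddChar.sum_eq_ite ψ
        _ = _ := if_congr hiff rfl rfl
    calc (Fintype.card (Fin k → R) : ℂ)
        = ∑ y : D, ∑ z : Fin k → R, χ (∑ i, (y : Fin k → R) i * z i) := lhs.symm
      _ = ∑ z : Fin k → R, ∑ y : D, χ (∑ i, (y : Fin k → R) i * z i) := Finset.sum_comm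
      _ = ∑ z : Fin k → R, if (∀ y ∈ D, ∑ i, y i * z i = 0)
            then (Fintype.card D : ℂ) else 0 :=
            Finset.sum_congr rfl fun z _ => rhs z
      _ = (EF.card : ℂ) * (Fintype.card D : ℂ) := by
            rw [Finset.sum_ite, Finset.sum_const, Finset.sum_const_zero, add_zero, hEF,
              nsmul_eq_mul]
  -- Natural-number versions
  have c1 : Fintype.card R = AnnF.card * Fintype.card I := by exact_mod_cast count1
  have c2 : Fintype.card (Fin k → R) = EF.card * Fintype.card D := by exact_mod_cast count2
  -- group-theoretic counts
  have c3 : Fintype.card (Fin k → R) = Fintype.card I * Fintype.card D := by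
    have h1 := AddSubgroup.card_eq_card_quotient_mul_card_addSubgroup D
    have h2 : Nat.card ((Fin k → R) ⧸ D) = Nat.card I :=
      Nat.card_congr (QuotientAddGroup.quotientKerEquivRange (dotHom g)).toEquiv
    rw [h2] at h1
    simpa [Nat.card_eq_fintype_card] using h1
  have c4 : Fintype.card R = Fintype.card (rmulHom g).range * Fintype.card (rmulHom g).ker := by
    have h1 := AddSubgroup.card_eq_card_quotient_mul_card_addSubgroup (rmulHom g).ker
    have h2 : Nat.card (R ⧸ (rmulHom g).ker) = Nat.card (rmulHom g).range :=
      Nat.card_congr (QuotientAddGroup.quotientKerEquivRange (rmulHom g)).toEquiv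
    rw [h2] at h1
    simpa [Nat.card_eq_fintype_card] using h1
  -- ker (rmulHom g) = Ann
  have c5 : ∀ r : R, (rmulHom g r = 0) ↔ (∀ x ∈ I, x * r = 0) := by
    intro r
    constructor
    · rintro hker x ⟨y, rfl⟩
      rw [dotHom_apply, Finset.sum_mul]
      refine Finset.sum_eq_zero fun i _ => ?_
      have hgr : g i * r = 0 := congr_fun hker i
      rw [mul_assoc, hgr, mul_zero]
    · intro h1
      funext i
      simpa using h1 (g i) (hgI i)
  have cAnn : Fintype.card (rmulHom g).ker = AnnF.card := by
    rw [← Fintype.card_coe AnnF]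
    refine Fintype.card_congr (Equiv.subtypeEquivRight fun r => ?_)
    simp only [hAnnF, Finset.mem_coe, Finset.mem_filter, Finset.mem_univ, true_and,
      AddMonoidHom.mem_ker]
    exact c5 r
  have cGr : Fintype.card (rmulHom g).range = GrF.card := by
    rw [← Fintype.card_coe GrF]
    refine Fintype.card_congr (Equiv.subtypeEquivRight fun z => ?_)
    simp [hGrF]
  -- deduce EF.card = GrF.card
  have hApos : 0 < AnnF.card :=
    Finset.card_pos.mpr ⟨0, by simp [hAnnF]⟩
  have hDpos : 0 < Fintype.card D := Fintype.card_pos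
  have hIG : Fintype.card I = GrF.card := by
    have e : AnnF.card * Fintype.card I = AnnF.card * GrF.card := by
      rw [← c1, c4, cAnn, cGr, mul_comm]
    exact Nat.eq_of_mul_eq_mul_left hApos e
  have hEI : EF.card = Fintype.card I := by
    have := c2.symm.trans c3
    exact Nat.eq_of_mul_eq_mul_right hDpos this
  -- GrF ⊆ EF and equal cards
  have hsub : GrF ⊆ EF := by
    intro z hz
    rw [hGrF, Finset.mem_filter] at hz
    obtain ⟨-, r, rfl⟩ := hz
    rw [hEF, Finset.mem_filter]
    refine ⟨Finset.mem_univ _, fun y hy => ?_⟩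
    have : ∑ i, y i * (rmulHom g r) i = (∑ i, y i * g i) * r := by
      rw [Finset.sum_mul]
      exact Finset.sum_congr rfl fun i _ => by rw [rmulHom_apply, mul_assoc]
    rw [this]
    have hy0 : ∑ i, y i * g i = 0 := hy
    rw [hy0, zero_mul]
  have heq : GrF = EF :=
    Finset.eq_of_subset_of_card_le hsub (by rw [hEI, hIG])
  have hhE : h ∈ EF := by
    rw [hEF, Finset.mem_filter]
    exact ⟨Finset.mem_univ _, fun y hy => hD y hy⟩
  rw [← heq, hGrF, Finset.mem_filter] at hhE
  obtain ⟨-, r, hr⟩ := hhE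
  exact ⟨r, by rw [← hr]; rfl⟩

end FrobAux
namespace FrobAux

variable {R : Type} [Ring R] [Fintype R] (χ : AddChar R ℂ)

/-- Left multiplication by a unit, as an equivalence. -/
def umul (u : Rˣ) : R ≃ R where
  toFun r := ↑u * r
  invFun r := ↑u⁻¹ * r
  left_inv r := by simp
  right_inv r := by simp

/-- Componentwise left multiplication by `u⁻¹`. -/
def eu {k : ℕ} (u : Rˣ) : (Fin k → R) ≃ (Fin k → R) :=
  Equiv.piCongrRight fun _ => umul (u⁻¹)

@[simp] lemma eu_apply {k : ℕ} (u : Rˣ) (y : Fin k → R) (i : Fin k) :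
    eu u y i = ↑u⁻¹ * y i := rfl

lemma umul_dot {k : ℕ} (u : Rˣ) (a y : Fin k → R) :
    ↑u * ∑ i, (↑u⁻¹ * y i) * a i = ∑ i, y i * a i := by
  rw [Finset.mul_sum]
  refine Finset.sum_congr rfl fun i _ => ?_
  have h1 : (↑u : R) * ((↑u⁻¹ * y i) * a i) = (↑u * (↑u⁻¹ * y i)) * a i :=
    (mul_assoc _ _ _).symm
  rw [h1, Units.mul_inv_cancel_left]

end FrobAux

open FrobAux in
/-- For nonzero `g, h ∈ R^k` with `h ∉ gR`:
`Σ_{x ∈ R^k} w_hom(x·g)·w_hom(x·h) = |R|^k`. -/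
theorem sum_whom_dot_of_not_assoc {R : Type} [Ring R] [Fintype R]
    (χ : AddChar R ℂ) (hχ : IsGenChar χ)
    (k : ℕ) (g h : Fin k → R) (hg : g ≠ 0) (hh : h ≠ 0)
    (hgh : ¬ ∃ r : R, h = fun i => g i * r) :
    ∑ x : Fin k → R,
        whom χ (∑ i, x i * g i) * whom χ (∑ i, x i * h i) =
      (Fintype.card R : ℂ) ^ k := by
  classical
  -- the key vanishing sum
  have Tzero : ∀ w : Rˣ,
      ∑ y : Fin k → R, χ ((∑ i, y i * g i) + ↑w * ∑ i, y i * h i) = 0 := by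
    intro w
    set τ : AddChar (Fin k → R) ℂ :=
      χ.compAddMonoidHom ((dotHom g) + (AddMonoidHom.mulLeft (↑w : R)).comp (dotHom h)) with hτ
    have happ : ∀ y, τ y = χ ((∑ i, y i * g i) + ↑w * ∑ i, y i * h i) := fun y => rfl
    have hne : τ ≠ 0 := by
      intro h0
      rw [char_eq_zero_iff] at h0
      have hDh : ∀ y : Fin k → R, (∑ i, y i * g i) = 0 → (∑ i, y i * h i) = 0 := by
        intro y hy
        by_contra ha
        have hwr : ∀ r : R, χ (↑w * (r * ∑ i, y i * h i)) = 1 := by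
          intro r
          have h1 := h0 (fun i => r * y i)
          rw [happ] at h1
          rwa [smul_dot, smul_dot, hy, mul_zero, zero_add] at h1
        set a := ∑ i, y i * h i with hadef
        have hwa : (↑w * a : R) ≠ 0 := by
          intro h'
          apply ha
          have h2 : a = ↑w⁻¹ * (↑w * a) := (Units.inv_mul_cancel_left _ _).symm
          rw [h2, h', mul_zero]
        obtain ⟨x, hxmem, hx1⟩ := hχ (Submodule.span R {(↑w * a : R)})
          (by simpa [Submodule.span_singleton_eq_bot] using hwa)
        obtain ⟨s, rfl⟩ := Submodule.mem_span_singleton.mp hxmem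
        apply hx1
        have hrw : s • (↑w * a : R) = ↑w * ((↑w⁻¹ * s * ↑w) * a) := by
          simp [smul_eq_mul, mul_assoc]
        rw [hrw]
        exact hwr _
      obtain ⟨r, hr⟩ := key χ hχ g h hDh
      exact hgh ⟨r, hr⟩
    calc ∑ y : Fin k → R, χ ((∑ i, y i * g i) + ↑w * ∑ i, y i * h i)
        = ∑ y : Fin k → R, τ y := Finset.sum_congr rfl fun y _ => (happ y).symm
      _ = 0 := AddChar.sum_eq_zero_iff_ne_zero.mpr hne
  -- linear terms vanish
  have hA : ∑ x : Fin k → R, (∑ u : Rˣ, χ (↑u * ∑ i, x i * g i)) = 0 := by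
    rw [Finset.sum_comm]
    refine Finset.sum_eq_zero fun u _ => ?_
    rw [← Equiv.sum_comp (eu (k := k) u) (fun x => χ (↑u * ∑ i, x i * g i))]
    have hpt : ∀ y : Fin k → R,
        χ (↑u * ∑ i, (eu u y) i * g i) = χ (∑ i, y i * g i) := by
      intro y
      simp only [eu_apply]
      rw [umul_dot]
    rw [Finset.sum_congr rfl fun y _ => hpt y]
    exact sum_dot χ hχ hg
  have hB : ∑ x : Fin k → R, (∑ v : Rˣ, χ (↑v * ∑ i, x i * h i)) = 0 := by
    rw [Finset.sum_comm]
    refine Finset.sum_eq_zero fun v _ => ?_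
    rw [← Equiv.sum_comp (eu (k := k) v) (fun x => χ (↑v * ∑ i, x i * h i))]
    have hpt : ∀ y : Fin k → R,
        χ (↑v * ∑ i, (eu v y) i * h i) = χ (∑ i, y i * h i) := by
      intro y
      simp only [eu_apply]
      rw [umul_dot]
    rw [Finset.sum_congr rfl fun y _ => hpt y]
    exact sum_dot χ hχ hh
  -- quadratic term vanishes
  have hAB : ∑ x : Fin k → R, ((∑ u : Rˣ, χ (↑u * ∑ i, x i * g i))
      * (∑ v : Rˣ, χ (↑v * ∑ i, x i * h i))) = 0 := by
    have expand : ∀ x : Fin k → R,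
        (∑ u : Rˣ, χ (↑u * ∑ i, x i * g i)) * (∑ v : Rˣ, χ (↑v * ∑ i, x i * h i))
          = ∑ u : Rˣ, ∑ v : Rˣ, χ ((↑u * ∑ i, x i * g i) + (↑v * ∑ i, x i * h i)) := by
      intro x
      rw [Finset.sum_mul_sum]
      exact Finset.sum_congr rfl fun u _ => Finset.sum_congr rfl fun v _ =>
        (AddChar.map_add_eq_mul χ _ _).symm
    rw [Finset.sum_congr rfl fun x _ => expand x, Finset.sum_comm]
    refine Finset.sum_eq_zero fun u _ => ?_
    rw [Finset.sum_comm]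
    refine Finset.sum_eq_zero fun v _ => ?_
    rw [← Equiv.sum_comp (eu (k := k) u)
      (fun x => χ ((↑u * ∑ i, x i * g i) + (↑v * ∑ i, x i * h i)))]
    have hpt : ∀ y : Fin k → R,
        χ ((↑u * ∑ i, (eu u y) i * g i) + (↑v * ∑ i, (eu u y) i * h i))
          = χ ((∑ i, y i * g i) + ↑(v * u⁻¹) * ∑ i, y i * h i) := by
      intro y
      simp only [eu_apply]
      rw [umul_dot, smul_dot]
      rw [← mul_assoc, ← Units.val_mul]
    rw [Finset.sum_congr rfl fun y _ => hpt y]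
    exact Tzero (v * u⁻¹)
  -- expansion of the product of weights
  have expand : ∀ x : Fin k → R,
      whom χ (∑ i, x i * g i) * whom χ (∑ i, x i * h i)
        = 1 - (Fintype.card Rˣ : ℂ)⁻¹ * (∑ u : Rˣ, χ (↑u * ∑ i, x i * g i))
            - (Fintype.card Rˣ : ℂ)⁻¹ * (∑ v : Rˣ, χ (↑v * ∑ i, x i * h i))
            + (Fintype.card Rˣ : ℂ)⁻¹ * (Fintype.card Rˣ : ℂ)⁻¹
              * ((∑ u : Rˣ, χ (↑u * ∑ i, x i * g i))
                  * (∑ v : Rˣ, χ (↑v * ∑ i, x i * h i))) := by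
    intro x
    simp only [whom]
    ring
  rw [Finset.sum_congr rfl fun x _ => expand x, Finset.sum_add_distrib,
    Finset.sum_sub_distrib, Finset.sum_sub_distrib, ← Finset.mul_sum, ← Finset.mul_sum,
    ← Finset.mul_sum, hA, hB, hAB]
  simp [Finset.card_univ, Fintype.card_fun]
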